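/- Let d ≥ 3 and let F ∈ (ℂ^n)^{⊗d} be a sharp, concise, symmetric tensor of minimal border rank, with corresponding degree-d polynomial p_F. Then π(Ann(F)_{𝟏−e_d}) = Ann(p_F)_{d−1}. -/

import Mathlib

/-!
Common setup, following the paper "On the abundance of minimal border rank symmetric
tensors verifying Comon's conjecture".

* `S = ℂ[α_{i,j} : 1 ≤ i ≤ d, 1 ≤ j ≤ n]` is modeled as `MvPolynomial (Fin d × Fin n) ℂ`,
  with the `ℤ^d`-grading in which `deg α_{i,j} = e_i`; `Scomp n d u` is the
  multidegree-`u` component (`u : Fin d → ℕ`).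
* `V = ℂ[β_1,…,β_n]` is modeled as `MvPolynomial (Fin n) ℂ` with its standard grading;
  `Vcomp n N` is the degree-`N` component.
* The graded duals `T` and `P` are modeled by the same polynomial rings, with `S`
  (resp. `V`) acting by differentiation (`apolar`); `ann F` is the apolar
  (annihilator) ideal of `F`.
* A tensor `F ∈ (ℂ^n)^{⊗d}` is an element of the multidegree-`(1,…,1)` component
  `Scomp n d (fun _ => 1)` (a multilinear form in the `x_{i,j}`).
-/

open MvPolynomial Submodule Module

noncomputable section

namespace BorderComon

/-- the multidegree-`u` graded component of `S`. -/
def Scomp (n d : ℕ) (u : Fin d → ℕ) : Submodule ℂ (MvPolynomial (Fin d × Fin n) ℂ) :=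
  weightedHomogeneousSubmodule ℂ (fun p : Fin d × Fin n => Pi.single p.1 1) u

/-- the degree-`N` graded component of `V`. -/
def Vcomp (n : ℕ) (N : ℕ) : Submodule ℂ (MvPolynomial (Fin n) ℂ) :=
  homogeneousSubmodule (Fin n) ℂ N

/-- the diagonal ring map `π : S → V`, `α_{i,j} ↦ β_j`. -/
def piAlg (n d : ℕ) : MvPolynomial (Fin d × Fin n) ℂ →ₐ[ℂ] MvPolynomial (Fin n) ℂ :=
  aeval (fun p : Fin d × Fin n => X p.2)

/-- `π` as a `ℂ`-linear map. -/
def piL (n d : ℕ) : MvPolynomial (Fin d × Fin n) ℂ →ₗ[ℂ] MvPolynomial (Fin n) ℂ :=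
  (piAlg n d).toLinearMap

/-- the ring map `ρ : S → V`, `α_{1,j} ↦ β_j` and `α_{i,j} ↦ 0` for `i ≥ 2`
(rows are `0`-indexed, so the first row is row `0`). -/
def rho (n d : ℕ) : MvPolynomial (Fin d × Fin n) ℂ →ₐ[ℂ] MvPolynomial (Fin n) ℂ :=
  aeval (fun p : Fin d × Fin n => if (p.1 : ℕ) = 0 then X p.2 else 0)

/-- the result of differentiating `F` by the monomial `X^a`:
`∂^a X^b = (∏_i b_i!/(b_i-a_i)!) X^{b-a}` (and `= 0` unless `a ≤ b`, which is
automatic since the descending factorial vanishes there). -/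
def diffMon {σ : Type*} (a : σ →₀ ℕ) (F : MvPolynomial σ ℂ) : MvPolynomial σ ℂ :=
  ∑ b ∈ F.support, (F.coeff b * ∏ i ∈ a.support, ((b i).descFactorial (a i) : ℂ)) •
    monomial (b - a) (1 : ℂ)

/-- the apolarity action: `apolar F ψ = ψ ∘ F` is the result of letting `ψ` act on `F`
by differentiation, linearly in `ψ`. -/
def apolar {σ : Type*} (F : MvPolynomial σ ℂ) : MvPolynomial σ ℂ →ₗ[ℂ] MvPolynomial σ ℂ :=
  Finsupp.lsum ℂ (fun a : σ →₀ ℕ => LinearMap.toSpanSingleton ℂ _ (diffMon a F)) ∘ₗ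
    (AddMonoidAlgebra.coeffLinearEquiv ℂ).toLinearMap

/-- the apolar (annihilator) ideal `Ann(F) = {ψ : ψ ∘ F = 0}`, as a subspace. -/
def ann {σ : Type*} (F : MvPolynomial σ ℂ) : Submodule ℂ (MvPolynomial σ ℂ) :=
  LinearMap.ker (apolar F)

/-- the ideal `I_R ⊆ S` generated by the `2×2` minors
`α_{i,j} α_{k,ℓ} − α_{i,ℓ} α_{k,j}`, `i < k`, `j < ℓ`. -/
def IR (n d : ℕ) : Ideal (MvPolynomial (Fin d × Fin n) ℂ) :=
  Ideal.span {q | ∃ i k : Fin d, ∃ j l : Fin n, i < k ∧ j < l ∧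
    q = X (i, j) * X (k, l) - X (i, l) * X (k, j)}

/-- `J ⊆ S` is a (multigraded) homogeneous ideal: it is the sum of its
multigraded components. -/
def IsHomogS (n d : ℕ) (J : Ideal (MvPolynomial (Fin d × Fin n) ℂ)) : Prop :=
  Submodule.restrictScalars ℂ J = ⨆ u : Fin d → ℕ, (Submodule.restrictScalars ℂ J ⊓ Scomp n d u)

/-- `I ⊆ V` is a homogeneous ideal: it is the sum of its graded components. -/
def IsHomogV (n : ℕ) (I : Ideal (MvPolynomial (Fin n) ℂ)) : Prop :=
  Submodule.restrictScalars ℂ I = ⨆ N : ℕ, (Submodule.restrictScalars ℂ I ⊓ Vcomp n N)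

/-- the exponent redistribution underlying `ψ_u`: in the sorted list
`i_1 ≤ ⋯ ≤ i_N` of the indices of the monomial `β^γ` (value `j` occurring `γ j`
times, `N = |γ|`), row `i` receives the block of positions
`[∑_{i'<i} u i', ∑_{i'≤i} u i')`, while value `j` occupies positions
`[∑_{j'<j} γ j', ∑_{j'≤j} γ j')`; hence the exponent of `α_{i,j}` is the size of
the intersection of these two intervals. -/
def distrib (n d : ℕ) (u : Fin d → ℕ) (γ : Fin n →₀ ℕ) : (Fin d × Fin n) →₀ ℕ :=
  Finsupp.equivFunOnFinite.symm fun p : Fin d × Fin n =>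
    min (∑ i ∈ Finset.univ.filter fun i : Fin d => (i : ℕ) ≤ (p.1 : ℕ), u i)
        (∑ j ∈ Finset.univ.filter fun j : Fin n => (j : ℕ) ≤ (p.2 : ℕ), γ j)
    - max (∑ i ∈ Finset.univ.filter fun i : Fin d => (i : ℕ) < (p.1 : ℕ), u i)
          (∑ j ∈ Finset.univ.filter fun j : Fin n => (j : ℕ) < (p.2 : ℕ), γ j)

/-- the linear map `ψ_u : V → S` sending a monomial `β_{i_1} β_{i_2} ⋯ β_{i_N}`
with `i_1 ≤ i_2 ≤ ⋯ ≤ i_N` to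
`(α_{1,i_1} ⋯ α_{1,i_{u_1}}) (α_{2,i_{u_1+1}} ⋯ α_{2,i_{u_1+u_2}}) ⋯`.
(Its restriction to `Vcomp n (∑ i, u i)` is the map `ψ_u : V_{|u|} → S_u` of the
paper.) -/
def psi (n d : ℕ) (u : Fin d → ℕ) :
    MvPolynomial (Fin n) ℂ →ₗ[ℂ] MvPolynomial (Fin d × Fin n) ℂ :=
  AddMonoidAlgebra.mapDomainLinearMap ℂ ℂ (distrib n d u)

/-- `Υ(I) = I_R + ∑_{u} ψ_u(I_{|u|}) ⊆ S`. -/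
def Upsilon (n d : ℕ) (I : Ideal (MvPolynomial (Fin n) ℂ)) :
    Submodule ℂ (MvPolynomial (Fin d × Fin n) ℂ) :=
  restrictScalars ℂ (IR n d) ⊔
    ⨆ u : Fin d → ℕ, Submodule.map (psi n d u) (restrictScalars ℂ I ⊓ Vcomp n (∑ i, u i))

/-- the irrelevant ideal `B_X = ∏_{i=1}^d (α_{i,1},…,α_{i,n}) ⊆ S`. -/
def BX (n d : ℕ) : Ideal (MvPolynomial (Fin d × Fin n) ℂ) :=
  ∏ i : Fin d, Ideal.span (Set.range fun j : Fin n => X (i, j))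

/-- the irrelevant ideal `B_Y = (β_1,…,β_n) ⊆ V`. -/
def BY (n : ℕ) : Ideal (MvPolynomial (Fin n) ℂ) :=
  Ideal.span (Set.range X)

/-- `Σ(J) = ⊕_{a ≥ 0} ⊕_{s ∈ ℰ} π(J_{a𝟏+s}) ⊆ V`, where
`ℰ = {0, e_1, e_1+e_2, …, e_1+⋯+e_{d-1}}` (the element `s` with `m` ones is
`fun i => if i < m then 1 else 0`). -/
def SigmaMap (n d : ℕ) (J : Ideal (MvPolynomial (Fin d × Fin n) ℂ)) :
    Submodule ℂ (MvPolynomial (Fin n) ℂ) :=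
  ⨆ a : ℕ, ⨆ m : Fin d, Submodule.map (piL n d)
    (restrictScalars ℂ J ⊓ Scomp n d (fun i => a + if (i : ℕ) < (m : ℕ) then 1 else 0))

/-- the set of tensors of rank at most `r`: sums of `r` decomposable tensors
`v_1 ⊗ ⋯ ⊗ v_d = ∏_i (∑_j v_i(j) x_{i,j})`. -/
def rankLE (n d r : ℕ) : Set (MvPolynomial (Fin d × Fin n) ℂ) :=
  {F | ∃ v : Fin r → Fin d → Fin n → ℂ,
    F = ∑ s : Fin r, ∏ i : Fin d, ∑ j : Fin n, C (v s i j) * X (i, j)}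

/-- `F` has border rank at most `r`: coefficientwise (finitely many coefficients are
involved), `F` lies in the closure of the set of tensors of rank at most `r`. -/
def brkLE (n d : ℕ) (F : MvPolynomial (Fin d × Fin n) ℂ) (r : ℕ) : Prop :=
  (fun m => coeff m F) ∈ closure ((fun G => fun m => coeff m G) '' rankLE n d r)

/-- the border rank of a tensor. -/
def brk (n d : ℕ) (F : MvPolynomial (Fin d × Fin n) ℂ) : ℕ :=
  sInf {r | brkLE n d F r}

/-- polynomials that are sums of `r` `d`-th powers of linear forms. -/
def srankLE (n d r : ℕ) : Set (MvPolynomial (Fin n) ℂ) :=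
  {p | ∃ c : Fin r → Fin n → ℂ, p = ∑ s : Fin r, (∑ j : Fin n, C (c s j) * X j) ^ d}

/-- `p` has symmetric border rank at most `r`. -/
def sbrkLE (n d : ℕ) (p : MvPolynomial (Fin n) ℂ) (r : ℕ) : Prop :=
  (fun m => coeff m p) ∈ closure ((fun q => fun m => coeff m q) '' srankLE n d r)

/-- the symmetric border rank of a degree-`d` form. -/
def sbrk (n d : ℕ) (p : MvPolynomial (Fin n) ℂ) : ℕ :=
  sInf {r | sbrkLE n d p r}

/-- `F` is a symmetric tensor: invariant under the permutations of the `d` factors. -/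
def IsSymm (n d : ℕ) (F : MvPolynomial (Fin d × Fin n) ℂ) : Prop :=
  ∀ τ : Equiv.Perm (Fin d), rename (Prod.map τ id) F = F

/-- the degree-`d` polynomial `p_F` corresponding to a symmetric tensor `F`, obtained
by identifying all the rows of variables (`x_{i,j} ↦ y_j`); `F` is the polarization
of `p_F`. -/
def pF (n d : ℕ) (F : MvPolynomial (Fin d × Fin n) ℂ) : MvPolynomial (Fin n) ℂ :=
  rename Prod.snd F

/-- `F` is concise: the contraction `(ℂ^n)^* → (ℂ^n)^{⊗(d-1)}` of the first tensor
factor, `w ↦ F(x_{1,j} := w_j)`, is injective. -/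
def Concise (n d : ℕ) (F : MvPolynomial (Fin d × Fin n) ℂ) : Prop :=
  Function.Injective fun w : Fin n → ℂ =>
    aeval (fun p : Fin d × Fin n => if (p.1 : ℕ) = 0 then C (w p.2) else X p) F

/-- the ideal `∑_{0<u<𝟏} S·Ann(F)_u` generated by the components `Ann(F)_u`,
`0 < u < 𝟏` (componentwise). -/
def midIdeal (n d : ℕ) (F : MvPolynomial (Fin d × Fin n) ℂ) :
    Ideal (MvPolynomial (Fin d × Fin n) ℂ) :=
  Ideal.span (⋃ u ∈ {u : Fin d → ℕ | 0 < u ∧ u < fun _ => 1},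
    ((ann F ⊓ Scomp n d u : Submodule ℂ (MvPolynomial (Fin d × Fin n) ℂ)) :
      Set (MvPolynomial (Fin d × Fin n) ℂ)))

/-- `F` is a *sharp* tensor:
(1) `Ann(F)` has exactly `n-1` minimal generators of multidegree `𝟏`;
(2) `dim (S/Ann F)_u = n` for all `0 < u < 𝟏`;
(3) `dim (S/(Ann(F)_{e_i+e_j}))_{s e_i + e_j} = n` for all `i ≠ j`, `1 ≤ s ≤ d-1`. -/
def Sharp (n d : ℕ) (F : MvPolynomial (Fin d × Fin n) ℂ) : Prop :=
  (finrank ℂ (ann F ⊓ Scomp n d fun _ => 1 :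
        Submodule ℂ (MvPolynomial (Fin d × Fin n) ℂ)) -
      finrank ℂ (restrictScalars ℂ (midIdeal n d F) ⊓ Scomp n d fun _ => 1 :
        Submodule ℂ (MvPolynomial (Fin d × Fin n) ℂ)) = n - 1) ∧
  (∀ u : Fin d → ℕ, 0 < u → u < (fun _ => 1) →
    finrank ℂ (Scomp n d u ⧸ Submodule.comap (Scomp n d u).subtype (ann F)) = n) ∧
  (∀ i j : Fin d, i ≠ j → ∀ s : ℕ, 1 ≤ s → s ≤ d - 1 →
    finrank ℂ (Scomp n d (Pi.single i s + Pi.single j 1) ⧸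
      Submodule.comap (Scomp n d (Pi.single i s + Pi.single j 1)).subtype
        (restrictScalars ℂ (Ideal.span
          ((ann F ⊓ Scomp n d (Pi.single i 1 + Pi.single j 1) :
            Submodule ℂ (MvPolynomial (Fin d × Fin n) ℂ)) :
            Set (MvPolynomial (Fin d × Fin n) ℂ))))) = n)
/-! ### Auxiliary lemmas -/

section Aux

lemma sum_eq_one_exists {ι : Type*} [Fintype ι] [DecidableEq ι] {f : ι → ℕ}
    (h : ∑ i, f i = 1) : ∃ i₀, ∀ i, f i = if i = i₀ then 1 else 0 := by
  have h0 : ∃ i₀, f i₀ ≠ 0 := by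
    by_contra hc
    push_neg at hc
    simp [hc] at h
  obtain ⟨i₀, hi₀⟩ := h0
  have h1 : f i₀ ≤ 1 := by
    have := Finset.single_le_sum (f := f) (fun i _ => Nat.zero_le _) (Finset.mem_univ i₀)
    omega
  refine ⟨i₀, fun i => ?_⟩
  by_cases hi : i = i₀
  · subst hi; simp; omega
  · have hsub : ({i, i₀} : Finset ι) ⊆ Finset.univ := Finset.subset_univ _
    have h2 := Finset.sum_le_sum_of_subset (f := f) hsub
    rw [Finset.sum_pair hi, h] at h2
    simp only [if_neg hi]
    omega

lemma descFactorial_succ_self (n : ℕ) : (n + 1).descFactorial n = (n + 1).factorial := by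
  induction n with
  | zero => simp
  | succ m ih =>
      rw [Nat.succ_descFactorial_succ, ih, Nat.factorial_succ (m+1), Nat.factorial_succ m]

lemma diffMon_monomial {σ : Type*} (a b : σ →₀ ℕ) (c : ℂ) :
    diffMon a (monomial b c) =
      (c * ∏ i ∈ a.support, ((b i).descFactorial (a i) : ℂ)) • monomial (b - a) 1 := by
  classical
  rcases eq_or_ne c 0 with rfl | hc
  · simp [diffMon]
  · rw [diffMon, support_monomial, if_neg hc, Finset.sum_singleton, coeff_monomial, if_pos rfl]

/-- `diffMon a` as a linear map. -/
def diffMonL {σ : Type*} (a : σ →₀ ℕ) : MvPolynomial σ ℂ →ₗ[ℂ] MvPolynomial σ ℂ :=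
  Finsupp.lsum ℂ (fun b => LinearMap.toSpanSingleton ℂ _
    ((∏ i ∈ a.support, ((b i).descFactorial (a i) : ℂ)) • monomial (b - a) (1:ℂ))) ∘ₗ
    (AddMonoidAlgebra.coeffLinearEquiv ℂ).toLinearMap

lemma diffMon_eq_diffMonL {σ : Type*} (a : σ →₀ ℕ) (F : MvPolynomial σ ℂ) :
    diffMon a F = diffMonL a F := by
  rw [diffMon, diffMonL]
  erw [LinearMap.comp_apply, Finsupp.lsum_apply, Finsupp.sum]
  refine Finset.sum_congr rfl fun b _ => ?_
  rw [LinearMap.toSpanSingleton_apply, smul_smul]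
  rfl

lemma apolar_monomial {σ : Type*} (F : MvPolynomial σ ℂ) (a : σ →₀ ℕ) (c : ℂ) :
    apolar F (monomial a c) = c • diffMon a F := by
  rw [← single_eq_monomial, apolar]
  erw [LinearMap.comp_apply, Finsupp.lsum_single, LinearMap.toSpanSingleton_apply]

end Aux
section Graphs

variable {n d : ℕ}

/-- the exponent of the monomial `∏_{i ∈ A} α_{i, k i}`. -/
def grOn (A : Finset (Fin d)) (k : Fin d → Fin n) : (Fin d × Fin n) →₀ ℕ :=
  ∑ i ∈ A, Finsupp.single (i, k i) 1

/-- the exponent of the monomial `∏_{i ∈ A} β_{k i}`. -/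
def cont (A : Finset (Fin d)) (k : Fin d → Fin n) : Fin n →₀ ℕ :=
  ∑ i ∈ A, Finsupp.single (k i) 1

lemma grOn_apply (A : Finset (Fin d)) (k : Fin d → Fin n) (p : Fin d × Fin n) :
    grOn A k p = if p.1 ∈ A ∧ k p.1 = p.2 then 1 else 0 := by
  classical
  obtain ⟨p1, p2⟩ := p
  rw [grOn, Finset.sum_apply']
  rw [Finset.sum_congr rfl (fun i _ => Finsupp.single_apply)]
  have h : ∀ i ∈ A, (if ((i, k i) : Fin d × Fin n) = (p1, p2) then (1:ℕ) else 0)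
      = if i = p1 then (if k p1 = p2 then 1 else 0) else 0 := by
    intro i _
    by_cases hi : i = p1
    · subst hi
      by_cases hk : k i = p2
      · simp [Prod.ext_iff, hk]
      · simp [Prod.ext_iff, hk]
    · simp [Prod.ext_iff, hi]
  rw [Finset.sum_congr rfl h, Finset.sum_ite_eq']
  by_cases hp : p1 ∈ A <;> by_cases hk : k p1 = p2 <;> simp [hp, hk]

lemma cont_apply (A : Finset (Fin d)) (k : Fin d → Fin n) (j : Fin n) :
    cont A k j = ∑ i ∈ A, if k i = j then 1 else 0 := by
  classical
  rw [cont, Finset.sum_apply']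
  exact Finset.sum_congr rfl fun i _ => Finsupp.single_apply

lemma cont_sum (A : Finset (Fin d)) (k : Fin d → Fin n) :
    ∑ j, cont A k j = A.card := by
  classical
  simp only [cont_apply]
  rw [Finset.sum_comm]
  have h : ∀ i ∈ A, (∑ j, if k i = j then (1:ℕ) else 0) = 1 := by
    intro i _
    rw [Finset.sum_ite_eq]
    simp
  rw [Finset.sum_congr rfl h, Finset.sum_const, smul_eq_mul, mul_one]

lemma mapDomain_snd_grOn (A : Finset (Fin d)) (k : Fin d → Fin n) :
    Finsupp.mapDomain Prod.snd (grOn A k) = cont A k := by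
  rw [grOn, cont, Finsupp.mapDomain_finset_sum]
  exact Finset.sum_congr rfl fun i _ => Finsupp.mapDomain_single

lemma weight_grOn (A : Finset (Fin d)) (k : Fin d → Fin n) :
    (Finsupp.weight fun p : Fin d × Fin n => Pi.single p.1 (1:ℕ)) (grOn A k)
      = fun i => if i ∈ A then 1 else 0 := by
  classical
  rw [grOn, map_sum]
  have h : ∀ i ∈ A, (Finsupp.weight fun p : Fin d × Fin n => Pi.single p.1 (1:ℕ))
      (Finsupp.single (i, k i) 1) = (Pi.single i 1 : Fin d → ℕ) := by
    intro i _
    rw [Finsupp.weight_apply, Finsupp.sum_single_index]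
    · rw [one_smul]
    · rw [zero_smul]
  rw [Finset.sum_congr rfl h]
  funext i'
  rw [Finset.sum_apply]
  rw [Finset.sum_congr rfl (fun i _ => Pi.single_apply i (1:ℕ) i'), Finset.sum_ite_eq]

lemma rowsum_of_weight {m : (Fin d × Fin n) →₀ ℕ} {v : Fin d → ℕ}
    (hm : (Finsupp.weight fun p : Fin d × Fin n => Pi.single p.1 (1:ℕ)) m = v) (i : Fin d) :
    ∑ j, m (i, j) = v i := by
  classical
  rw [← hm, Finsupp.weight_apply, Finsupp.sum, Finset.sum_apply]
  simp only [Pi.smul_apply, Pi.single_apply, smul_eq_mul]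
  rw [Finset.sum_subset (Finset.subset_univ m.support) (fun p _ hp => by
    rw [Finsupp.notMem_support_iff.mp hp, zero_mul])]
  rw [Fintype.sum_prod_type]
  have h : ∀ i' : Fin d, (∑ j, m (i', j) * if i = i' then 1 else 0)
      = if i = i' then ∑ j, m (i', j) else 0 := by
    intro i'
    by_cases hi : i = i' <;> simp [hi]
  rw [Finset.sum_congr rfl (fun i' _ => h i'), Finset.sum_ite_eq]
  simp

lemma exists_grOn (hn : 0 < n) (A : Finset (Fin d)) (m : (Fin d × Fin n) →₀ ℕ)
    (hm : (Finsupp.weight fun p : Fin d × Fin n => Pi.single p.1 (1:ℕ)) m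
        = fun i => if i ∈ A then 1 else 0) :
    ∃ k, m = grOn A k := by
  classical
  have hrow : ∀ i : Fin d, ∑ j, m (i, j) = if i ∈ A then 1 else 0 := fun i =>
    rowsum_of_weight hm i
  set P : Fin d → Fin n → Prop := fun i j₀ => ∀ j, m (i, j) = if j = j₀ then 1 else 0 with hP
  refine ⟨fun i => if h : ∃ j₀, P i j₀ then h.choose else ⟨0, hn⟩, ?_⟩
  ext p
  obtain ⟨i, j⟩ := p
  rw [grOn_apply]
  by_cases hA : i ∈ A
  · have h1 : ∑ j, m (i, j) = 1 := by rw [hrow]; simp [hA]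
    have h2 : ∃ j₀, P i j₀ := sum_eq_one_exists h1
    simp only [dif_pos h2]
    have h3 := h2.choose_spec j
    rw [h3]
    by_cases hj : j = h2.choose
    · simp [hj, hA]
    · simp [hj, hA, Ne.symm hj]
  · have h1 : ∑ j', m (i, j') = 0 := by rw [hrow]; simp [hA]
    have h2 : m (i, j) = 0 := Finset.sum_eq_zero_iff.mp h1 j (Finset.mem_univ j)
    simp [hA, h2]

lemma grOn_univ_injective : Function.Injective (grOn (Finset.univ : Finset (Fin d)) :
    (Fin d → Fin n) → (Fin d × Fin n) →₀ ℕ) := by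
  intro k k' h
  funext i
  have h1 : grOn Finset.univ k (i, k i) = grOn Finset.univ k' (i, k i) := by rw [h]
  rw [grOn_apply, grOn_apply] at h1
  rw [if_pos ⟨Finset.mem_univ i, rfl⟩] at h1
  by_cases hki : k' i = k i
  · exact hki.symm
  · rw [if_neg (fun hh => hki hh.2)] at h1
    exact absurd h1 one_ne_zero

end Graphs
section Counting

variable {n d : ℕ}

/-- the last row index. -/
def lastI {d : ℕ} (hd0 : 0 < d) : Fin d := ⟨d - 1, by omega⟩

lemma cont_comp_perm (h : Fin d → Fin n) (σ : Equiv.Perm (Fin d)) :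
    cont Finset.univ (h ∘ σ) = cont Finset.univ h := by
  rw [cont, cont]
  exact Equiv.sum_comp σ fun i => Finsupp.single (h i) 1

lemma cont_fiber_card (g : Fin d → Fin n) (j : Fin n) :
    Fintype.card {t // g t = j} = cont Finset.univ g j := by
  classical
  rw [cont_apply, Fintype.card_subtype, Finset.card_filter]

lemma cont_update (hd0 : 0 < d) (k : Fin d → Fin n) (l : Fin n) :
    cont Finset.univ (Function.update k (lastI hd0) l)
      = cont (Finset.univ.erase (lastI hd0)) k + Finsupp.single l 1 := by
  classical
  rw [cont, cont, ← Finset.sum_erase_add _ _ (Finset.mem_univ (lastI hd0))]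
  congr 1
  · refine Finset.sum_congr rfl fun i hi => ?_
    rw [Function.update_of_ne (Finset.ne_of_mem_erase hi)]
  · rw [Function.update_self]

lemma exists_comp_eq {α ι : Type*} [Fintype α] [Fintype ι] [DecidableEq α] [DecidableEq ι]
    {h g : α → ι} (hc : ∀ j, Fintype.card {t // h t = j} = Fintype.card {t // g t = j}) :
    ∃ σ₀ : Equiv.Perm α, h ∘ σ₀ = g := by
  have e : ∀ j, {t // g t = j} ≃ {t // h t = j} := fun j => Fintype.equivOfCardEq (hc j).symm
  refine ⟨(Equiv.sigmaFiberEquiv g).symm.trans ((Equiv.sigmaCongrRight e).trans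
    (Equiv.sigmaFiberEquiv h)), ?_⟩
  funext t
  simp only [Function.comp_apply, Equiv.trans_apply]
  have h1 : (Equiv.sigmaFiberEquiv g).symm t = ⟨g t, ⟨t, rfl⟩⟩ := rfl
  rw [h1]
  have h2 : (Equiv.sigmaCongrRight e) ⟨g t, ⟨t, rfl⟩⟩ = ⟨g t, e (g t) ⟨t, rfl⟩⟩ := rfl
  rw [h2]
  exact (e (g t) ⟨t, rfl⟩).2

lemma card_perm_fiber {α ι : Type*} [Fintype α] [Fintype ι] [DecidableEq α] [DecidableEq ι]
    (h g : α → ι) (hc : ∀ j, Fintype.card {t // h t = j} = Fintype.card {t // g t = j}) :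
    Fintype.card {σ : Equiv.Perm α // h ∘ σ = g}
      = ∏ j, (Fintype.card {t // g t = j}).factorial := by
  obtain ⟨σ₀, hσ₀⟩ := exists_comp_eq hc
  have e : {σ : Equiv.Perm α // h ∘ σ = g} ≃ {τ : Equiv.Perm α // g ∘ τ = g} := by
    refine ⟨fun σp => ⟨σ₀⁻¹ * σp.1, ?_⟩, fun τp => ⟨σ₀ * τp.1, ?_⟩, ?_, ?_⟩
    · funext t
      have h1 : g (σ₀⁻¹ (σp.1 t)) = h (σ₀ (σ₀⁻¹ (σp.1 t))) := (congrFun hσ₀ _).symm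
      simp only [Function.comp_apply, Equiv.Perm.mul_apply, h1]
      rw [Equiv.Perm.coe_inv, Equiv.apply_symm_apply]
      exact congrFun σp.2 t
    · funext t
      have h1 : h (σ₀ (τp.1 t)) = g (τp.1 t) := congrFun hσ₀ _
      simp only [Function.comp_apply, Equiv.Perm.mul_apply, h1]
      exact congrFun τp.2 t
    · intro σp
      exact Subtype.ext (mul_inv_cancel_left σ₀ σp.1)
    · intro τp
      exact Subtype.ext (inv_mul_cancel_left σ₀ τp.1)
  rw [Fintype.card_congr e, DomMulAct.stabilizer_card g]

lemma count_core (hd0 : 0 < d) (k g : Fin d → Fin n) :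
    (Finset.univ.filter fun x : Equiv.Perm (Fin d) × Fin n =>
        (Function.update k (lastI hd0) x.2) ∘ x.1 = g).card
      = ∏ j ∈ (cont (Finset.univ.erase (lastI hd0)) k).support,
          (cont Finset.univ g j).descFactorial
            (cont (Finset.univ.erase (lastI hd0)) k j) := by
  classical
  set γk := cont (Finset.univ.erase (lastI hd0)) k with hγk
  set γg := cont Finset.univ g with hγgdef
  have hcontupd : ∀ (σ : Equiv.Perm (Fin d)) (l' : Fin n),
      ((Function.update k (lastI hd0) l') ∘ σ = g) →
      γg = γk + Finsupp.single l' 1 := by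
    intro σ l' hx
    rw [hγgdef, hγk, ← hx, cont_comp_perm, cont_update hd0 k l']
  by_cases hle : ∀ j, γk j ≤ γg j
  · have hsk : ∑ j, γk j = d - 1 := by
      rw [hγk, cont_sum, Finset.card_erase_of_mem (Finset.mem_univ (lastI hd0)),
        Finset.card_univ, Fintype.card_fin]
    have hsg : ∑ j, γg j = d := by
      rw [hγgdef, cont_sum, Finset.card_univ, Fintype.card_fin]
    have hδ : ∑ j, (γg j - γk j) = 1 := by
      rw [Finset.sum_tsub_distrib Finset.univ (fun j _ => hle j), hsg, hsk]
      omega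
    obtain ⟨l, hl⟩ := sum_eq_one_exists hδ
    have hγg : γg = γk + Finsupp.single l 1 := by
      ext j
      rw [Finsupp.add_apply, Finsupp.single_apply]
      have h1 := hl j
      have h2 := hle j
      by_cases hj : j = l
      · subst hj
        rw [if_pos rfl] at h1 ⊢
        omega
      · rw [if_neg hj] at h1
        rw [if_neg (fun hh => hj hh.symm)]
        omega
    have keyl : ∀ (σ : Equiv.Perm (Fin d)) (l' : Fin n),
        ((Function.update k (lastI hd0) l') ∘ σ = g) → l' = l := by
      intro σ l' hx
      have h1 := (hcontupd σ l' hx).symm.trans hγg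
      have h2 : Finsupp.single l' (1:ℕ) = Finsupp.single l 1 := add_left_cancel h1
      exact (Finsupp.single_left_inj one_ne_zero).mp h2
    rw [← Fintype.card_subtype]
    have e : {x : Equiv.Perm (Fin d) × Fin n // (Function.update k (lastI hd0) x.2) ∘ x.1 = g}
        ≃ {σ : Equiv.Perm (Fin d) // (Function.update k (lastI hd0) l) ∘ σ = g} := by
      refine ⟨fun x => ⟨x.1.1, ?_⟩, fun σ => ⟨(σ.1, l), σ.2⟩, ?_, ?_⟩
      · have hll := keyl x.1.1 x.1.2 x.2
        rw [← hll]
        exact x.2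
      · intro x
        have hll := keyl x.1.1 x.1.2 x.2
        apply Subtype.ext
        apply Prod.ext
        · rfl
        · exact hll.symm
      · intro σ
        rfl
    rw [Fintype.card_congr e]
    rw [card_perm_fiber]
    · have hterm : ∀ j ∈ γk.support, (Fintype.card {t // g t = j}).factorial
          = (γg j).descFactorial (γk j) := by
        intro j hj
        rw [cont_fiber_card, ← hγgdef]
        by_cases hjl : j = l
        · subst hjl
          have h1 : γg j = γk j + 1 := by
            rw [hγg, Finsupp.add_apply, Finsupp.single_apply, if_pos rfl]
          rw [h1, descFactorial_succ_self]
        · have h1 : γg j = γk j := by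
            rw [hγg, Finsupp.add_apply, Finsupp.single_apply,
              if_neg (fun hh => hjl hh.symm), add_zero]
          rw [h1, Nat.descFactorial_self]
      rw [← Finset.prod_congr rfl hterm]
      refine (Finset.prod_subset (Finset.subset_univ γk.support) ?_).symm
      intro j _ hj
      rw [cont_fiber_card, ← hγgdef]
      have h1 : γk j = 0 := Finsupp.notMem_support_iff.mp hj
      have h2 : γg j ≤ 1 := by
        rw [hγg, Finsupp.add_apply, h1, zero_add, Finsupp.single_apply]
        split <;> omega
      rcases Nat.le_one_iff_eq_zero_or_eq_one.mp h2 with h3 | h3 <;> rw [h3] <;> rfl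
    · intro j
      rw [cont_fiber_card, cont_fiber_card, cont_update hd0 k l, ← hγk, ← hγgdef, hγg]
  · push_neg at hle
    obtain ⟨j₀, hj₀⟩ := hle
    have h1 : (Finset.univ.filter fun x : Equiv.Perm (Fin d) × Fin n =>
        (Function.update k (lastI hd0) x.2) ∘ x.1 = g) = ∅ := by
      rw [Finset.filter_eq_empty_iff]
      intro x _
      intro hx
      have h2 := hcontupd x.1 x.2 hx
      have h3 : γk j₀ ≤ γg j₀ := by
        rw [h2, Finsupp.add_apply]
        exact Nat.le_add_right _ _
      omega
    rw [h1, Finset.card_empty]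
    symm
    apply Finset.prod_eq_zero_iff.mpr
    refine ⟨j₀, ?_, ?_⟩
    · rw [Finsupp.mem_support_iff]
      omega
    · exact Nat.descFactorial_eq_zero_iff_lt.mpr hj₀

end Counting
section Ftensor

variable {n d : ℕ}

lemma rep_of_mem (hn : 0 < n) {F : MvPolynomial (Fin d × Fin n) ℂ}
    (hF : F ∈ Scomp n d fun _ => 1) :
    F = ∑ g : Fin d → Fin n,
      coeff (grOn Finset.univ g) F • monomial (grOn Finset.univ g) (1:ℂ) := by
  classical
  apply MvPolynomial.ext
  intro m
  rw [coeff_sum]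
  have hterm : ∀ g : Fin d → Fin n,
      coeff m (coeff (grOn Finset.univ g) F • monomial (grOn Finset.univ g) (1:ℂ))
        = if grOn Finset.univ g = m then coeff (grOn Finset.univ g) F else 0 := by
    intro g
    rw [coeff_smul, coeff_monomial]
    by_cases h : grOn Finset.univ g = m <;> simp [h]
  rw [Finset.sum_congr rfl (fun g _ => hterm g)]
  by_cases hm : ∃ g₀ : Fin d → Fin n, grOn Finset.univ g₀ = m
  · obtain ⟨g₀, rfl⟩ := hm
    rw [Finset.sum_eq_single g₀]
    · rw [if_pos rfl]
    · intro g _ hg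
      rw [if_neg (fun hh => hg (grOn_univ_injective hh))]
    · intro h
      exact absurd (Finset.mem_univ g₀) h
  · push_neg at hm
    rw [Finset.sum_eq_zero (fun g _ => if_neg (hm g))]
    by_contra hc
    have h1 := (mem_weightedHomogeneousSubmodule ℂ _ _ F).mp hF (Ne.symm (fun h => hc h.symm))
    have h2 : (Finsupp.weight fun p : Fin d × Fin n => Pi.single p.1 (1:ℕ)) m
        = fun i => if i ∈ (Finset.univ : Finset (Fin d)) then 1 else 0 := by
      rw [h1]
      funext i
      simp
    obtain ⟨g, hg⟩ := exists_grOn hn Finset.univ m h2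
    exact hm g hg.symm

lemma coeff_grOn_comp {F : MvPolynomial (Fin d × Fin n) ℂ} (hsym : IsSymm n d F)
    (g : Fin d → Fin n) (τ : Equiv.Perm (Fin d)) :
    coeff (grOn Finset.univ (g ∘ τ)) F = coeff (grOn Finset.univ g) F := by
  have hinj : Function.Injective (Prod.map (τ : Fin d → Fin d) (id : Fin n → Fin n)) :=
    (Equiv.injective τ).prodMap Function.injective_id
  have h1 : Finsupp.mapDomain (Prod.map (τ : Fin d → Fin d) id) (grOn Finset.univ (g ∘ τ))
      = grOn Finset.univ g := by
    rw [grOn, Finsupp.mapDomain_finset_sum,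
      Finset.sum_congr rfl (fun i _ => Finsupp.mapDomain_single), grOn]
    exact Equiv.sum_comp τ (fun i' => Finsupp.single (i', g i') 1)
  calc coeff (grOn Finset.univ (g ∘ τ)) F
      = coeff (Finsupp.mapDomain (Prod.map (τ : Fin d → Fin d) id) (grOn Finset.univ (g ∘ τ)))
          (rename (Prod.map (τ : Fin d → Fin d) id) F) :=
        (coeff_rename_mapDomain _ hinj _ _).symm
    _ = coeff (grOn Finset.univ g) F := by rw [h1, hsym τ]

lemma prod_desc_grOn (hd0 : 0 < d) (k g : Fin d → Fin n) :
    (∏ p ∈ (grOn (Finset.univ.erase (lastI hd0)) k).support,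
      ((grOn Finset.univ g p).descFactorial
        ((grOn (Finset.univ.erase (lastI hd0)) k) p) : ℂ))
    = if (∀ i ∈ Finset.univ.erase (lastI hd0), g i = k i) then 1 else 0 := by
  classical
  by_cases h : ∀ i ∈ Finset.univ.erase (lastI hd0), g i = k i
  · rw [if_pos h]
    apply Finset.prod_eq_one
    intro p hp
    have h1 := Finsupp.mem_support_iff.mp hp
    rw [grOn_apply] at h1
    have h2 : p.1 ∈ Finset.univ.erase (lastI hd0) ∧ k p.1 = p.2 := by
      by_contra hc
      rw [if_neg hc] at h1
      exact h1 rfl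
    have h3 : grOn (Finset.univ.erase (lastI hd0)) k p = 1 := by
      rw [grOn_apply, if_pos h2]
    have h4 : grOn Finset.univ g p = 1 := by
      rw [grOn_apply, if_pos ⟨Finset.mem_univ _, (h p.1 h2.1).trans h2.2⟩]
    rw [h3, h4]
    norm_num
  · rw [if_neg h]
    push_neg at h
    obtain ⟨i₀, hi₀, hne⟩ := h
    apply Finset.prod_eq_zero (i := (i₀, k i₀))
    · rw [Finsupp.mem_support_iff, grOn_apply, if_pos ⟨hi₀, rfl⟩]
      exact one_ne_zero
    · have h4 : grOn Finset.univ g (i₀, k i₀) = 0 := by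
        rw [grOn_apply]
        simp only [Finset.mem_univ, true_and]
        rw [if_neg hne]
      have h3 : grOn (Finset.univ.erase (lastI hd0)) k (i₀, k i₀) = 1 := by
        rw [grOn_apply, if_pos ⟨hi₀, rfl⟩]
      rw [h3, h4]
      norm_num

lemma sub_grOn (hd0 : 0 < d) (k g : Fin d → Fin n)
    (hagree : ∀ i ∈ Finset.univ.erase (lastI hd0), g i = k i) :
    grOn Finset.univ g - grOn (Finset.univ.erase (lastI hd0)) k
      = Finsupp.single ((lastI hd0), g (lastI hd0)) 1 := by
  have h1 : grOn Finset.univ g = grOn (Finset.univ.erase (lastI hd0)) k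
      + Finsupp.single ((lastI hd0), g (lastI hd0)) 1 := by
    rw [grOn, grOn, ← Finset.sum_erase_add _ _ (Finset.mem_univ (lastI hd0))]
    congr 1
    refine Finset.sum_congr rfl fun i hi => ?_
    rw [hagree i hi]
  rw [h1, add_tsub_cancel_left]

lemma diffMon_grOn_F (hn : 0 < n) (hd0 : 0 < d) {F : MvPolynomial (Fin d × Fin n) ℂ}
    (hF : F ∈ Scomp n d fun _ => 1) (k : Fin d → Fin n) :
    diffMon (grOn (Finset.univ.erase (lastI hd0)) k) F
      = ∑ l : Fin n, coeff (grOn Finset.univ (Function.update k (lastI hd0) l)) F •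
          monomial (Finsupp.single ((lastI hd0), l) 1) (1:ℂ) := by
  classical
  rw [diffMon_eq_diffMonL]
  conv_lhs => rw [rep_of_mem hn hF]
  rw [map_sum]
  have hterm : ∀ g : Fin d → Fin n,
      diffMonL (grOn (Finset.univ.erase (lastI hd0)) k)
          (coeff (grOn Finset.univ g) F • monomial (grOn Finset.univ g) (1:ℂ))
        = if (∀ i ∈ Finset.univ.erase (lastI hd0), g i = k i) then
            coeff (grOn Finset.univ g) F •
              monomial (Finsupp.single ((lastI hd0), g (lastI hd0)) 1) (1:ℂ)
          else 0 := by
    intro g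
    rw [map_smul, ← diffMon_eq_diffMonL, diffMon_monomial, one_mul, prod_desc_grOn hd0 k g]
    by_cases h : ∀ i ∈ Finset.univ.erase (lastI hd0), g i = k i
    · rw [if_pos h, if_pos h, one_smul, sub_grOn hd0 k g h]
    · rw [if_neg h, if_neg h, zero_smul, smul_zero]
  rw [Finset.sum_congr rfl (fun g _ => hterm g), ← Finset.sum_filter]
  refine Finset.sum_nbij' (fun g => g (lastI hd0)) (fun l => Function.update k (lastI hd0) l)
    (fun g _ => Finset.mem_univ _) (fun l _ => ?_) (fun g hg => ?_) (fun l _ => ?_)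
    (fun g hg => ?_)
  · rw [Finset.mem_filter]
    refine ⟨Finset.mem_univ _, fun i hi => ?_⟩
    rw [Function.update_of_ne (Finset.ne_of_mem_erase hi)]
  · rw [Finset.mem_filter] at hg
    funext i
    by_cases hi : i = lastI hd0
    · subst hi
      rw [Function.update_self]
    · rw [Function.update_of_ne hi]
      exact (hg.2 i (Finset.mem_erase.mpr ⟨hi, Finset.mem_univ i⟩)).symm
  · rw [Function.update_self]
  · rw [Finset.mem_filter] at hg
    have hupd : Function.update k (lastI hd0) (g (lastI hd0)) = g := by
      funext i
      by_cases hi : i = lastI hd0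
      · subst hi
        rw [Function.update_self]
      · rw [Function.update_of_ne hi]
        exact (hg.2 i (Finset.mem_erase.mpr ⟨hi, Finset.mem_univ i⟩)).symm
    rw [hupd]

end Ftensor
section MainIdentity

variable {n d : ℕ}

lemma main_identity (hn : 0 < n) (hd0 : 0 < d) {F : MvPolynomial (Fin d × Fin n) ℂ}
    (hF : F ∈ Scomp n d fun _ => 1) (hsym : IsSymm n d F) (k : Fin d → Fin n) :
    diffMon (cont (Finset.univ.erase (lastI hd0)) k) (pF n d F)
      = (d.factorial : ℂ) • ∑ l : Fin n,
          coeff (grOn Finset.univ (Function.update k (lastI hd0) l)) F •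
            monomial (Finsupp.single l 1) (1:ℂ) := by
  classical
  set Φ : Equiv.Perm (Fin d) × Fin n → (Fin d → Fin n) :=
    fun x => (Function.update k (lastI hd0) x.2) ∘ x.1 with hΦ
  set w : (Fin d → Fin n) → MvPolynomial (Fin n) ℂ := fun g =>
    coeff (grOn Finset.univ g) F •
      monomial (cont Finset.univ g - cont (Finset.univ.erase (lastI hd0)) k) (1:ℂ) with hw
  have hpF : pF n d F = ∑ g : Fin d → Fin n,
      coeff (grOn Finset.univ g) F • monomial (cont Finset.univ g) (1:ℂ) := by
    rw [pF]
    conv_lhs => rw [rep_of_mem hn hF]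
    rw [map_sum]
    refine Finset.sum_congr rfl fun g _ => ?_
    rw [map_smul, rename_monomial, mapDomain_snd_grOn]
  have hterm : ∀ g : Fin d → Fin n,
      diffMonL (cont (Finset.univ.erase (lastI hd0)) k)
          (coeff (grOn Finset.univ g) F • monomial (cont Finset.univ g) (1:ℂ))
        = (Finset.univ.filter fun x : Equiv.Perm (Fin d) × Fin n => Φ x = g).card • w g := by
    intro g
    rw [map_smul, ← diffMon_eq_diffMonL, diffMon_monomial, one_mul, ← Nat.cast_prod,
      ← count_core hd0 k g, Nat.cast_smul_eq_nsmul, smul_comm]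
  have hLHS : diffMon (cont (Finset.univ.erase (lastI hd0)) k) (pF n d F)
      = ∑ g : Fin d → Fin n,
        (Finset.univ.filter fun x : Equiv.Perm (Fin d) × Fin n => Φ x = g).card • w g := by
    rw [hpF, diffMon_eq_diffMonL, map_sum]
    exact Finset.sum_congr rfl fun g _ => hterm g
  have hcomp := Finset.sum_comp (s := (Finset.univ : Finset (Equiv.Perm (Fin d) × Fin n))) w Φ
  have hext : ∑ g ∈ Finset.univ.image Φ,
        (Finset.univ.filter fun x => Φ x = g).card • w g
      = ∑ g : Fin d → Fin n,
        (Finset.univ.filter fun x : Equiv.Perm (Fin d) × Fin n => Φ x = g).card • w g := by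
    refine Finset.sum_subset (Finset.subset_univ _) fun g _ hg => ?_
    have hempty : (Finset.univ.filter fun x : Equiv.Perm (Fin d) × Fin n => Φ x = g) = ∅ := by
      rw [Finset.filter_eq_empty_iff]
      intro x hx hEq
      exact hg (Finset.mem_image.mpr ⟨x, hx, hEq⟩)
    rw [hempty, Finset.card_empty, zero_smul]
  have hwΦ : ∀ x : Equiv.Perm (Fin d) × Fin n, w (Φ x)
      = coeff (grOn Finset.univ (Function.update k (lastI hd0) x.2)) F •
          monomial (Finsupp.single x.2 1) (1:ℂ) := by
    intro x
    rw [hw]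
    dsimp only
    rw [hΦ]
    dsimp only
    rw [coeff_grOn_comp hsym _ x.1, cont_comp_perm, cont_update hd0, add_tsub_cancel_left]
  have hRHS : ∑ x : Equiv.Perm (Fin d) × Fin n, w (Φ x)
      = (d.factorial : ℂ) • ∑ l : Fin n,
          coeff (grOn Finset.univ (Function.update k (lastI hd0) l)) F •
            monomial (Finsupp.single l 1) (1:ℂ) := by
    rw [Finset.sum_congr rfl fun x _ => hwΦ x, Fintype.sum_prod_type]
    dsimp only
    rw [Finset.sum_const, Finset.card_univ, Fintype.card_perm, Fintype.card_fin,
      ← Nat.cast_smul_eq_nsmul ℂ]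
  rw [hLHS, ← hext, ← hcomp, hRHS]

end MainIdentity
section Assembly

variable {n d : ℕ}

lemma uIndicator (hd0 : 0 < d) :
    (fun i : Fin d => if (i : ℕ) = d - 1 then 0 else 1)
      = fun i => if i ∈ Finset.univ.erase (lastI hd0) then 1 else 0 := by
  funext i
  by_cases h : (i : ℕ) = d - 1
  · rw [if_pos h, if_neg]
    intro hmem
    exact (Finset.mem_erase.mp hmem).1 (Fin.ext h)
  · rw [if_neg h, if_pos (Finset.mem_erase.mpr
      ⟨fun hh => h (congrArg Fin.val hh), Finset.mem_univ i⟩)]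

lemma piL_apply (ψ : MvPolynomial (Fin d × Fin n) ℂ) : piL n d ψ = rename Prod.snd ψ := by
  rw [piL, AlgHom.toLinearMap_apply, rename_eq_aeval]
  rfl

lemma mem_Scomp_u_graph (hn : 0 < n) (hd0 : 0 < d) {ψ : MvPolynomial (Fin d × Fin n) ℂ}
    (hψ : ψ ∈ Scomp n d fun i => if (i : ℕ) = d - 1 then 0 else 1)
    {a : (Fin d × Fin n) →₀ ℕ} (ha : a ∈ ψ.support) :
    ∃ k : Fin d → Fin n, a = grOn (Finset.univ.erase (lastI hd0)) k := by
  have h1 := (mem_weightedHomogeneousSubmodule ℂ _ _ ψ).mp hψ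
    (MvPolynomial.mem_support_iff.mp ha)
  exact exists_grOn hn _ a (by rw [h1, uIndicator hd0])

lemma apolar_pF_rename (hn : 0 < n) (hd0 : 0 < d) {F : MvPolynomial (Fin d × Fin n) ℂ}
    (hF : F ∈ Scomp n d fun _ => 1) (hsym : IsSymm n d F)
    {ψ : MvPolynomial (Fin d × Fin n) ℂ}
    (hψ : ψ ∈ Scomp n d fun i => if (i : ℕ) = d - 1 then 0 else 1) :
    apolar (pF n d F) (rename Prod.snd ψ)
      = (d.factorial : ℂ) • rename Prod.snd (apolar F ψ) := by
  classical
  conv_lhs => rw [← support_sum_monomial_coeff ψ]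
  conv_rhs => rw [← support_sum_monomial_coeff ψ]
  rw [map_sum, map_sum, map_sum (apolar F), map_sum, Finset.smul_sum]
  refine Finset.sum_congr rfl fun a ha => ?_
  obtain ⟨k, rfl⟩ := mem_Scomp_u_graph hn hd0 hψ ha
  rw [rename_monomial, mapDomain_snd_grOn, ← single_eq_monomial, apolar_monomial,
    single_eq_monomial, apolar_monomial, main_identity hn hd0 hF hsym k,
    diffMon_grOn_F hn hd0 hF k, map_smul, map_sum]
  have hstep : (∑ l : Fin n, rename Prod.snd (coeff (grOn Finset.univ
        (Function.update k (lastI hd0) l)) F • monomial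
          (Finsupp.single ((lastI hd0), l) 1) (1:ℂ)))
      = ∑ l : Fin n, coeff (grOn Finset.univ (Function.update k (lastI hd0) l)) F •
          monomial (Finsupp.single l 1) (1:ℂ) := by
    refine Finset.sum_congr rfl fun l _ => ?_
    rw [map_smul, rename_monomial, Finsupp.mapDomain_single]
  rw [hstep, smul_comm]

lemma apolar_mem_span (hn : 0 < n) (hd0 : 0 < d) {F : MvPolynomial (Fin d × Fin n) ℂ}
    (hF : F ∈ Scomp n d fun _ => 1) {ψ : MvPolynomial (Fin d × Fin n) ℂ}
    (hψ : ψ ∈ Scomp n d fun i => if (i : ℕ) = d - 1 then 0 else 1) :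
    apolar F ψ ∈ Submodule.span ℂ (Set.range fun l : Fin n =>
      (monomial (Finsupp.single ((lastI hd0), l) 1) (1:ℂ) :
        MvPolynomial (Fin d × Fin n) ℂ)) := by
  classical
  conv => rw [← support_sum_monomial_coeff ψ]
  rw [map_sum]
  apply Submodule.sum_mem
  intro a ha
  rw [apolar_monomial]
  apply Submodule.smul_mem
  obtain ⟨k, rfl⟩ := mem_Scomp_u_graph hn hd0 hψ ha
  rw [diffMon_grOn_F hn hd0 hF k]
  apply Submodule.sum_mem
  intro l _
  exact Submodule.smul_mem _ _ (Submodule.subset_span ⟨l, rfl⟩)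

lemma rename_inj_on_span (hd0 : 0 < d) {G : MvPolynomial (Fin d × Fin n) ℂ}
    (hG : G ∈ Submodule.span ℂ (Set.range fun l : Fin n =>
      (monomial (Finsupp.single ((lastI hd0), l) 1) (1:ℂ) :
        MvPolynomial (Fin d × Fin n) ℂ)))
    (h0 : rename (Prod.snd : Fin d × Fin n → Fin n) G = 0) : G = 0 := by
  classical
  set Ξ : MvPolynomial (Fin n) ℂ → MvPolynomial (Fin d × Fin n) ℂ := fun q =>
    ∑ l : Fin n, coeff (Finsupp.single l 1) q •
      monomial (Finsupp.single ((lastI hd0), l) 1) (1:ℂ) with hΞ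
  have key : ∀ G' ∈ Submodule.span ℂ (Set.range fun l : Fin n =>
      (monomial (Finsupp.single ((lastI hd0), l) 1) (1:ℂ) :
        MvPolynomial (Fin d × Fin n) ℂ)), Ξ (rename Prod.snd G') = G' := by
    intro G' hG'
    refine Submodule.span_induction ?_ ?_ ?_ ?_ hG'
    · rintro x ⟨l, rfl⟩
      rw [rename_monomial, Finsupp.mapDomain_single, hΞ]
      dsimp only
      rw [Finset.sum_eq_single l]
      · rw [coeff_monomial, if_pos rfl, one_smul]
      · intro l' _ hl'
        rw [coeff_monomial, if_neg (fun hh =>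
          hl' ((Finsupp.single_left_inj one_ne_zero).mp hh).symm), zero_smul]
      · intro hl
        exact absurd (Finset.mem_univ l) hl
    · rw [map_zero, hΞ]
      dsimp only
      rw [Finset.sum_eq_zero]
      intro l _
      rw [coeff_zero, zero_smul]
    · intro x y _ _ hx hy
      have hΞadd : Ξ (rename Prod.snd (x + y))
          = Ξ (rename Prod.snd x) + Ξ (rename Prod.snd y) := by
        rw [map_add, hΞ]
        dsimp only
        rw [← Finset.sum_add_distrib]
        refine Finset.sum_congr rfl fun l _ => ?_
        rw [coeff_add, add_smul]
      rw [hΞadd, hx, hy]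
    · intro c x _ hx
      have hΞsmul : Ξ (rename Prod.snd (c • x)) = c • Ξ (rename Prod.snd x) := by
        rw [map_smul, hΞ]
        dsimp only
        rw [Finset.smul_sum]
        refine Finset.sum_congr rfl fun l _ => ?_
        rw [coeff_smul, smul_eq_mul, mul_smul]
      rw [hΞsmul, hx]
  have h1 := key G hG
  rw [h0] at h1
  have h2 : Ξ 0 = 0 := by
    rw [hΞ]
    dsimp only
    exact Finset.sum_eq_zero fun l _ => by rw [coeff_zero, zero_smul]
  rw [← h1, h2]

lemma sum_univ_eq_degree (γ : Fin n →₀ ℕ) : ∑ j, γ j = γ.degree := by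
  rw [Finsupp.degree]
  exact (Finset.sum_subset (Finset.subset_univ _)
    (fun j _ hj => Finsupp.notMem_support_iff.mp hj)).symm

lemma degree_cont (A : Finset (Fin d)) (k : Fin d → Fin n) :
    (cont A k).degree = A.card := by
  rw [← sum_univ_eq_degree]
  exact cont_sum A k

lemma rename_mem_Vcomp (hn : 0 < n) (hd0 : 0 < d) {ψ : MvPolynomial (Fin d × Fin n) ℂ}
    (hψ : ψ ∈ Scomp n d fun i => if (i : ℕ) = d - 1 then 0 else 1) :
    rename (Prod.snd : Fin d × Fin n → Fin n) ψ ∈ Vcomp n (d - 1) := by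
  classical
  conv => rw [← support_sum_monomial_coeff ψ]
  rw [map_sum]
  apply Submodule.sum_mem
  intro a ha
  obtain ⟨k, hk⟩ := mem_Scomp_u_graph hn hd0 hψ ha
  rw [hk, rename_monomial, mapDomain_snd_grOn]
  rw [Vcomp, mem_homogeneousSubmodule]
  apply isHomogeneous_monomial
  rw [degree_cont, Finset.card_erase_of_mem (Finset.mem_univ _), Finset.card_univ,
    Fintype.card_fin]

lemma exists_cont (hn : 0 < n) (A : Finset (Fin d)) (γ : Fin n →₀ ℕ)
    (hγ : ∑ j, γ j = A.card) : ∃ k : Fin d → Fin n, cont A k = γ := by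
  classical
  induction A using Finset.induction generalizing γ with
  | empty =>
      refine ⟨fun _ => ⟨0, hn⟩, ?_⟩
      rw [Finset.card_empty] at hγ
      ext j
      rw [cont, Finset.sum_empty]
      have := Finset.sum_eq_zero_iff.mp hγ j (Finset.mem_univ j)
      rw [this]
      rfl
  | insert a A' hnotmem ih =>
      rw [Finset.card_insert_of_notMem hnotmem] at hγ
      have h0 : ∃ j₀, γ j₀ ≠ 0 := by
        by_contra hc
        push_neg at hc
        rw [Finset.sum_eq_zero (fun j _ => hc j)] at hγ
        omega
      obtain ⟨j₀, hj₀⟩ := h0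
      have hle : Finsupp.single j₀ 1 ≤ γ := Finsupp.single_le_iff.mpr (by omega)
      have hlep : ∀ j, Finsupp.single j₀ 1 j ≤ γ j := Finsupp.le_def.mp hle
      have hsum1 : ∑ j, Finsupp.single j₀ (1:ℕ) j = 1 := by
        rw [Finset.sum_congr rfl (fun j _ => Finsupp.single_apply), Finset.sum_ite_eq]
        simp
      have hsum' : ∑ j, ((γ - Finsupp.single j₀ 1 : Fin n →₀ ℕ) j) = A'.card := by
        rw [Finset.sum_congr rfl (fun j _ => Finsupp.tsub_apply γ (Finsupp.single j₀ 1) j),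
          Finset.sum_tsub_distrib Finset.univ (fun j _ => hlep j), hsum1]
        omega
      obtain ⟨k', hk'⟩ := ih _ hsum'
      refine ⟨Function.update k' a j₀, ?_⟩
      rw [cont, Finset.sum_insert hnotmem, Function.update_self]
      have hstep : (∑ i ∈ A', Finsupp.single (Function.update k' a j₀ i) (1:ℕ))
          = ∑ i ∈ A', Finsupp.single (k' i) 1 := by
        refine Finset.sum_congr rfl fun i hi => ?_
        rw [Function.update_of_ne (ne_of_mem_of_not_mem hi hnotmem)]
      rw [hstep, ← cont, hk', add_tsub_cancel_of_le hle]

end Assembly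

/-- Corollary 5.10: if `F` is a sharp concise symmetric tensor of
minimal border rank, then `π(Ann(F)_{𝟏−e_d}) = Ann(p_F)_{d−1}`. -/
theorem stmt_13 (n d : ℕ) (hd : 3 ≤ d)
    (F : MvPolynomial (Fin d × Fin n) ℂ)
    (hF : F ∈ Scomp n d fun _ => 1) (hsym : IsSymm n d F) (hconc : Concise n d F)
    (hsharp : Sharp n d F) (hbrk : brk n d F = n) :
    Submodule.map (piL n d)
        (ann F ⊓ Scomp n d fun i => if (i : ℕ) = d - 1 then 0 else 1) =
      ann (pF n d F) ⊓ Vcomp n (d - 1) := by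
  classical
  have hd0 : 0 < d := by omega
  rcases Nat.eq_zero_or_pos n with hn0 | hn
  · subst hn0
    have hS0 : ∀ ψ : MvPolynomial (Fin d × Fin 0) ℂ,
        ψ ∈ Scomp 0 d (fun i => if (i : ℕ) = d - 1 then 0 else 1) → ψ = 0 := by
      intro ψ hψ
      apply MvPolynomial.ext
      intro m
      rw [coeff_zero]
      by_contra hc
      have h1 := (mem_weightedHomogeneousSubmodule ℂ _ _ ψ).mp hψ hc
      have hm0 : m = 0 := by
        ext p
        exact p.2.elim0
      rw [hm0, map_zero] at h1
      have h2 := congrFun h1 (⟨0, hd0⟩ : Fin d)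
      rw [Pi.zero_apply, if_neg (by simp; omega : ¬ ((⟨0, hd0⟩ : Fin d) : ℕ) = d - 1)] at h2
      exact zero_ne_one h2
    have hV0 : ∀ q : MvPolynomial (Fin 0) ℂ, q ∈ Vcomp 0 (d - 1) → q = 0 := by
      intro q hq
      apply MvPolynomial.ext
      intro m
      rw [coeff_zero]
      by_contra hc
      have h1 := (mem_homogeneousSubmodule _ _).mp hq hc
      have hm0 : m = 0 := by
        ext j
        exact j.elim0
      rw [hm0, map_zero] at h1
      omega
    apply le_antisymm
    · rintro x hx
      rw [Submodule.mem_map] at hx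
      obtain ⟨ψ, hψ, rfl⟩ := hx
      rw [Submodule.mem_inf] at hψ
      rw [hS0 ψ hψ.2, map_zero]
      exact Submodule.zero_mem _
    · intro q hq
      rw [Submodule.mem_inf] at hq
      rw [hV0 q hq.2]
      exact Submodule.zero_mem _
  · apply le_antisymm
    · rintro x hx
      rw [Submodule.mem_map] at hx
      obtain ⟨ψ, hψ, rfl⟩ := hx
      rw [Submodule.mem_inf] at hψ
      obtain ⟨hψann, hψS⟩ := hψ
      rw [Submodule.mem_inf]
      constructor
      · rw [ann, LinearMap.mem_ker] at hψann ⊢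
        rw [piL_apply, apolar_pF_rename hn hd0 hF hsym hψS, hψann, map_zero, smul_zero]
      · rw [piL_apply]
        exact rename_mem_Vcomp hn hd0 hψS
    · intro q hq
      rw [Submodule.mem_inf] at hq
      obtain ⟨hqann, hqV⟩ := hq
      set kf : (Fin n →₀ ℕ) → Fin d → Fin n := fun γ =>
        if h : ∃ k : Fin d → Fin n, cont (Finset.univ.erase (lastI hd0)) k = γ
        then h.choose else fun _ => ⟨0, hn⟩ with hkf
      set ψ := ∑ γ ∈ q.support,
        coeff γ q • monomial (grOn (Finset.univ.erase (lastI hd0)) (kf γ)) (1:ℂ) with hψdef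
      have hsupp : ∀ γ ∈ q.support, cont (Finset.univ.erase (lastI hd0)) (kf γ) = γ := by
        intro γ hγ
        have h1 := (mem_homogeneousSubmodule _ _).mp hqV
          (MvPolynomial.mem_support_iff.mp hγ)
        have hdeg : ∑ j, γ j = (Finset.univ.erase (lastI hd0)).card := by
          rw [sum_univ_eq_degree, Finsupp.degree_eq_weight_one, ← Pi.one_def, h1,
            Finset.card_erase_of_mem (Finset.mem_univ _), Finset.card_univ, Fintype.card_fin]
        have h2 : ∃ k : Fin d → Fin n,
            cont (Finset.univ.erase (lastI hd0)) k = γ := exists_cont hn _ γ hdeg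
        rw [hkf]
        dsimp only
        rw [dif_pos h2]
        exact h2.choose_spec
      have hψS : ψ ∈ Scomp n d (fun i => if (i : ℕ) = d - 1 then 0 else 1) := by
        apply Submodule.sum_mem
        intro γ _
        apply Submodule.smul_mem
        rw [Scomp, mem_weightedHomogeneousSubmodule]
        apply isWeightedHomogeneous_monomial
        rw [weight_grOn, uIndicator hd0]
      have hpsi : rename (Prod.snd : Fin d × Fin n → Fin n) ψ = q := by
        rw [hψdef, map_sum]
        conv_rhs => rw [← support_sum_monomial_coeff q]
        refine Finset.sum_congr rfl fun γ hγ => ?_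
        rw [map_smul, rename_monomial, mapDomain_snd_grOn, hsupp γ hγ, smul_monomial,
          smul_eq_mul, mul_one]
      have hψann : ψ ∈ ann F := by
        rw [ann, LinearMap.mem_ker]
        have hB := apolar_pF_rename hn hd0 hF hsym hψS
        rw [hpsi] at hB
        rw [ann, LinearMap.mem_ker] at hqann
        rw [hqann] at hB
        have hfac : (d.factorial : ℂ) ≠ 0 := Nat.cast_ne_zero.mpr (Nat.factorial_ne_zero d)
        have h1 : rename (Prod.snd : Fin d × Fin n → Fin n) (apolar F ψ) = 0 := by
          rcases smul_eq_zero.mp hB.symm with h | h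
          · exact absurd h hfac
          · exact h
        exact rename_inj_on_span hd0 (apolar_mem_span hn hd0 hF hψS) h1
      rw [Submodule.mem_map]
      exact ⟨ψ, Submodule.mem_inf.mpr ⟨hψann, hψS⟩, by rw [piL_apply, hpsi]⟩

end BorderComon
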